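/- Assume the spectral locus is convex. Then for every c ∈ int T and every continuous monotone angle function θ_c : [0,1] → ℝ as in the definition of convexity, the total swept angle satisfies |θ_c(1) − θ_c(0)| > π. -/

import Mathlib

open MeasureTheory Set Real

noncomputable section

abbrev E3 := EuclideanSpace ℝ (Fin 3)

/-- The affine hyperplane `A = {x ∈ ℝ³ : x₁ + x₂ + x₃ = 1}`. -/
def planeA : Set E3 := {x | x 0 + x 1 + x 2 = 1}

/-- The standard 2-simplex `Δ²`. -/
def simplex2 : Set E3 := {x | (∀ i, 0 ≤ x i) ∧ x 0 + x 1 + x 2 = 1}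

/-- Interior relative to the affine hyperplane `A` (for subsets of `A`). -/
def intA (s : Set E3) : Set E3 :=
  {x | x ∈ planeA ∧ ∃ U : Set E3, IsOpen U ∧ x ∈ U ∧ U ∩ planeA ⊆ s}

/-- Closure relative to the affine hyperplane `A` (for subsets of `A`). -/
def closA (s : Set E3) : Set E3 :=
  {x | x ∈ planeA ∧ ∀ U : Set E3, IsOpen U → x ∈ U → (U ∩ planeA ∩ s).Nonempty}

/-- Boundary relative to the affine hyperplane `A` (for subsets of `A`). -/
def frontA (s : Set E3) : Set E3 := closA s \ intA s

/-- The color triangle `T = conv(η([0,1]))`. -/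
def colorTri (η : ℝ → E3) : Set E3 := convexHull ℝ (η '' Icc 0 1)

/-- The cyclic interval `[a,b]_𝕋 ⊆ [0,1]`. -/
def cycIcc (a b : ℝ) : Set ℝ := if a ≤ b then Icc a b else Icc a 1 ∪ Icc 0 b

/-- The color of a spectral density `f` w.r.t. the reference measure `mu`:
`c(f) = ∫_{[0,1]} f(λ) • η(λ) dμ̃(λ)`. -/
def colorOf (mu : Measure ℝ) (η : ℝ → E3) (f : ℝ → ℝ) : E3 :=
  ∫ lam in Icc (0:ℝ) 1, f lam • η lam ∂mu

/-- The spectral locus is convex: `η([0,1]) ⊆ ∂T` and from each interior point of `T` the locus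
is seen under a continuous monotone angle `θ_c` with total variation at most `2π`, where the
angle is measured in the fixed orthonormal frame `(u, v)` of the direction plane of `A`. -/
def IsConvexLocus (η : ℝ → E3) (u v : E3) : Prop :=
  η '' Icc 0 1 ⊆ frontA (colorTri η) ∧
  ∀ c ∈ intA (colorTri η), ∃ θ : ℝ → ℝ,
    ContinuousOn θ (Icc 0 1) ∧
    (MonotoneOn θ (Icc 0 1) ∨ AntitoneOn θ (Icc 0 1)) ∧
    |θ 1 - θ 0| ≤ 2 * π ∧
    ∀ lam ∈ Icc (0:ℝ) 1,
      η lam - c = ‖η lam - c‖ • (Real.cos (θ lam) • u + Real.sin (θ lam) • v)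

/-- The spectral locus is strictly convex: convex, and moreover `η(λ)` does not lie on the chord
`[η(a), η(b)]` for pairwise distinct `a, b, λ ∈ [0,1]`. -/
def IsStrictConvexLocus (η : ℝ → E3) (u v : E3) : Prop :=
  IsConvexLocus η u v ∧
  ∀ a ∈ Icc (0:ℝ) 1, ∀ b ∈ Icc (0:ℝ) 1, ∀ lam ∈ Icc (0:ℝ) 1,
    a ≠ b → b ≠ lam → a ≠ lam → η lam ∉ segment ℝ (η a) (η b)

/-- if the spectral locus is convex, then for every interior point `c` of the
color triangle and every admissible angle function `θ` the total swept angle exceeds `π`. -/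
theorem total_swept_angle_gt_pi
    (η : ℝ → E3) (hηcont : ContinuousOn η (Icc 0 1))
    (hηΔ : ∀ lam ∈ Icc (0:ℝ) 1, η lam ∈ simplex2)
    (u v : E3) (hu : ‖u‖ = 1) (hv : ‖v‖ = 1) (huv : (inner ℝ u v : ℝ) = 0)
    (hu0 : u 0 + u 1 + u 2 = 0) (hv0 : v 0 + v 1 + v 2 = 0)
    (hTint : (intA (colorTri η)).Nonempty)
    (hconv : IsConvexLocus η u v)
    (c : E3) (hc : c ∈ intA (colorTri η))
    (θ : ℝ → ℝ)
    (hθcont : ContinuousOn θ (Icc 0 1))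
    (hθmono : MonotoneOn θ (Icc 0 1) ∨ AntitoneOn θ (Icc 0 1))
    (hθ2π : |θ 1 - θ 0| ≤ 2 * π)
    (hθrep : ∀ lam ∈ Icc (0:ℝ) 1,
      η lam - c = ‖η lam - c‖ • (Real.cos (θ lam) • u + Real.sin (θ lam) • v)) :
    π < |θ 1 - θ 0| := by
  by_contra h
  push_neg at h
  -- midpoint angle and witness direction
  set θm : ℝ := (θ 0 + θ 1) / 2 with hθm
  set w : E3 := Real.cos θm • u + Real.sin θm • v with hw
  have h0 : (0:ℝ) ∈ Icc (0:ℝ) 1 := by constructor <;> norm_num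
  have h1 : (1:ℝ) ∈ Icc (0:ℝ) 1 := by constructor <;> norm_num
  -- inner product formula on the frame
  have hframe : ∀ a b a' b' : ℝ,
      (inner ℝ (a • u + b • v) (a' • u + b' • v) : ℝ) = a * a' + b * b' := by
    intro a b a' b'
    have hvu : (inner ℝ v u : ℝ) = 0 := by rw [real_inner_comm]; exact huv
    have huu : (inner ℝ u u : ℝ) = 1 := by
      rw [real_inner_self_eq_norm_sq, hu]; norm_num
    have hvv : (inner ℝ v v : ℝ) = 1 := by
      rw [real_inner_self_eq_norm_sq, hv]; norm_num
    simp only [inner_add_left, inner_add_right, real_inner_smul_left,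
      real_inner_smul_right, huu, hvv, huv, hvu]
    ring
  have hww : (inner ℝ w w : ℝ) = 1 := by
    rw [hw, hframe]
    nlinarith [Real.sin_sq_add_cos_sq θm]
  -- the angle stays within π/2 of θm
  have hang : ∀ lam ∈ Icc (0:ℝ) 1, |θ lam - θm| ≤ π / 2 := by
    intro lam hlam
    rcases hθmono with hm | hm
    · have hle1 : θ 0 ≤ θ lam := hm h0 hlam hlam.1
      have hle2 : θ lam ≤ θ 1 := hm hlam h1 hlam.2
      have h01 : θ 0 ≤ θ 1 := hm h0 h1 (by norm_num)
      have habs : |θ 1 - θ 0| = θ 1 - θ 0 := abs_of_nonneg (by linarith)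
      rw [abs_le]; rw [habs] at h
      constructor <;> simp only [hθm] <;> linarith
    · have hle1 : θ 1 ≤ θ lam := hm hlam h1 hlam.2
      have hle2 : θ lam ≤ θ 0 := hm h0 hlam hlam.1
      have h01 : θ 1 ≤ θ 0 := hm h0 h1 (by norm_num)
      have habs : |θ 1 - θ 0| = θ 0 - θ 1 := by
        rw [abs_of_nonpos (by linarith)]; ring
      rw [abs_le]; rw [habs] at h
      constructor <;> simp only [hθm] <;> linarith
  -- all curve points lie in the halfspace {x | ⟪w, x - c⟫ ≥ 0}
  have hhalf : ∀ lam ∈ Icc (0:ℝ) 1, (0:ℝ) ≤ inner ℝ w (η lam - c) := by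
    intro lam hlam
    rw [hθrep lam hlam, real_inner_smul_right, hw, hframe]
    have hcos : Real.cos θm * Real.cos (θ lam) + Real.sin θm * Real.sin (θ lam)
        = Real.cos (θ lam - θm) := by
      rw [Real.cos_sub]; ring
    rw [hcos]
    have habs := (abs_le.mp (hang lam hlam))
    have hcosnn : 0 ≤ Real.cos (θ lam - θm) :=
      Real.cos_nonneg_of_mem_Icc ⟨by linarith [habs.1], habs.2⟩
    positivity
  -- hence the whole color triangle lies in this halfspace
  have hTsub : colorTri η ⊆ {x : E3 | (inner ℝ w c : ℝ) ≤ inner ℝ w x} := by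
    apply convexHull_min
    · rintro x ⟨lam, hlam, rfl⟩
      have := hhalf lam hlam
      rw [inner_sub_right] at this
      simpa using this
    · exact convex_halfSpace_ge ⟨fun x y => inner_add_right w x y,
        fun r x => real_inner_smul_right w x r⟩ _
  -- find a ball around c inside the relative interior
  obtain ⟨hcA, U, hUopen, hcU, hUsub⟩ := hc
  obtain ⟨ε, hε, hball⟩ := Metric.isOpen_iff.mp hUopen c hcU
  set c' : E3 := c - (ε / 2) • w with hc'
  have hw0 : w 0 + w 1 + w 2 = 0 := by
    simp only [hw, PiLp.add_apply, PiLp.smul_apply, smul_eq_mul]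
    linear_combination Real.cos θm * hu0 + Real.sin θm * hv0
  have hc'A : c' ∈ planeA := by
    have hcA' : c 0 + c 1 + c 2 = 1 := hcA
    simp only [hc', planeA, Set.mem_setOf_eq, PiLp.sub_apply, PiLp.smul_apply,
      smul_eq_mul]
    linear_combination hcA' - ε / 2 * hw0
  have hnw : ‖w‖ = 1 := by
    have := real_inner_self_eq_norm_sq w
    rw [hww] at this
    nlinarith [norm_nonneg w]
  have hc'U : c' ∈ U := by
    apply hball
    rw [Metric.mem_ball, dist_eq_norm, hc']
    have : c - (ε / 2) • w - c = -((ε / 2) • w) := by abel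
    rw [this, norm_neg, norm_smul, hnw]
    rw [Real.norm_eq_abs, abs_of_pos (by linarith)]
    linarith
  have hc'T : c' ∈ colorTri η := hUsub ⟨hc'U, hc'A⟩
  have := hTsub hc'T
  rw [Set.mem_setOf_eq, hc', inner_sub_right, real_inner_smul_right, hww] at this
  linarith
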